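/- Let X = (X_k)_{k≥0} be a finite, linear semi-simplicial complex over T^n (each X_k a finite set of linear k-simplices over T^n, closed under passing to facets) whose 0-simplices have pairwise distinct images in T^n. Suppose there exists a function deg : X_0 → ℤ such that: (1) an edge [x,y] mod ℤ^n belongs to X_1 if and only if for some k there exist x_0 = x, x_1, …, x_k = y ∈ ℝ^n with [x_i] mod ℤ^n ∈ X_0 for all i and, for each 1 ≤ i ≤ k, [x_{i−1}, x_i] mod ℤ^n ∈ X_1 of degree one (meaning deg([x_i] mod ℤ^n) − deg([x_{i−1}] mod ℤ^n) = 1); and (2) for k > 1, a k-simplex [x_0, …, x_k] mod ℤ^n belongs to X_k if and only if [x_i] mod ℤ^n ∈ X_0 for all 0 ≤ i ≤ k and [x_{i−1}, x_i] mod ℤ^n ∈ X_1 for all 1 ≤ i ≤ k. Then there exist a bounded based sequence F^• of finite-rank free R_n-modules (with index sets I_k and matrix entries d^k_{ij} ∈ R_n, which may all be taken with all nonzero coefficients equal to 1) and points x_i ∈ ℝ^n, such that X_k = X(F^•)_k for all k ≥ 0. -/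

import Mathlib

open scoped BigOperators
open MeasureTheory

noncomputable section

/-- `ℤ^n`, the exponent lattice. -/
abbrev Zn (n : ℕ) : Type := Fin n → ℤ

/-- `ℝ^n`. -/
abbrev Rn (n : ℕ) : Type := Fin n → ℝ

/-- The Laurent polynomial ring `R_n = ℂ[z_1^{±1},…,z_n^{±1}]`, realized as the group
algebra of `ℤ^n` over `ℂ`. -/
abbrev LaurentRing (n : ℕ) : Type := AddMonoidAlgebra ℂ (Zn n)

/-- The embedding `ℤ^n → ℝ^n`. -/
def zToR {n : ℕ} (m : Zn n) : Rn n := fun j => (m j : ℝ)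

/-- A bounded based sequence `F^•` of finite-rank free `R_n`-modules: a finite index set
`I = ⊔_k I_k` (with `I_k = ∅` for `k > 0` and `I_0 ≠ ∅`), recorded via a degree function,
together with the matrix entries `d^k_{ij} ∈ R_n` of the maps `F^k → F^{k+1}`. -/
structure BasedSeq (n : ℕ) where
  I : Type
  fintypeI : Fintype I
  deg : I → ℤ
  deg_nonpos : ∀ i, deg i ≤ 0
  exists_deg_zero : ∃ i, deg i = 0
  d : I → I → LaurentRing n
  d_eq_zero : ∀ i j, deg i ≠ deg j + 1 → d i j = 0

attribute [instance] BasedSeq.fintypeI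

/-- Chains witnessing membership in `E_{ij}`: `EChain F i j m` holds iff there is a chain
`j = i_0, i_1, …, i_k = i` with `deg i_ℓ = deg i_{ℓ-1} + 1` at each step, exponents
`m_ℓ` in the support of the corresponding matrix entry, and `m = m_1 + ⋯ + m_k`. -/
inductive EChain {n : ℕ} (F : BasedSeq n) : F.I → F.I → Zn n → Prop where
  | base {i j : F.I} {m : Zn n} :
      F.deg i = F.deg j + 1 → m ∈ (F.d i j).coeff.support → EChain F i j m
  | step {i j k : F.I} {m m' : Zn n} :
      EChain F j k m → F.deg i = F.deg j + 1 → m' ∈ (F.d i j).coeff.support →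
      EChain F i k (m + m')

/-- The subset `E_{ij} ⊆ ℤ^n`. -/
def Eset {n : ℕ} (F : BasedSeq n) (i j : F.I) : Set (Zn n) := {m | EChain F i j m}

/-- The condition `(m_1, …, m_k) ∈ E_{i_1 i_0} × ⋯ × E_{i_k i_{k-1}}`. -/
def goodTuple {n : ℕ} (F : BasedSeq n) {k : ℕ} (c : Fin (k + 1) → F.I)
    (m : Fin k → Zn n) : Prop :=
  ∀ ℓ : Fin k, m ℓ ∈ Eset F (c ℓ.succ) (c ℓ.castSucc)

/-- The vertex tuple `(x_{i_0}, x_{i_1}+m_1, …, x_{i_k}+m_1+⋯+m_k)` in `ℝ^n`. -/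
def vtx {n : ℕ} (F : BasedSeq n) (x : F.I → Rn n) {k : ℕ}
    (c : Fin (k + 1) → F.I) (m : Fin k → Zn n) : Fin (k + 1) → Rn n :=
  fun a => x (c a) + zToR (∑ ℓ ∈ Finset.univ.filter (fun ℓ : Fin k => (ℓ : ℕ) < (a : ℕ)), m ℓ)

/-- Membership in `X(F^•)_k`: the tuple `y` represents (mod a common `ℤ^n`-translation `t`)
one of the linear `k`-simplices `[x_{i_0}, x_{i_1}+m_1, …, x_{i_k}+m_1+⋯+m_k] mod ℤ^n`. -/
def InX {n : ℕ} (F : BasedSeq n) (x : F.I → Rn n) (k : ℕ)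
    (y : Fin (k + 1) → Rn n) : Prop :=
  ∃ (c : Fin (k + 1) → F.I) (m : Fin k → Zn n) (t : Zn n),
    goodTuple F c m ∧ ∀ a, y a = vtx F x c m a + zToR t

/-- The integer lattice `ℤ^n ⊆ ℝ^n` as an additive subgroup. -/
def intLattice (n : ℕ) : AddSubgroup (Rn n) :=
  AddSubgroup.pi Set.univ fun _ => AddSubgroup.zmultiples (1 : ℝ)

/-- The torus `T^n = ℝ^n/ℤ^n`. -/
abbrev Torus (n : ℕ) := Rn n ⧸ intLattice n

/-- The projection `π : ℝ^n → T^n`. -/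
def toTorus {n : ℕ} : Rn n → Torus n := QuotientAddGroup.mk

/-- The tropical Lagrangian coamoeba `T(F^•) ⊆ T^n`. -/
def TropT {n : ℕ} (F : BasedSeq n) (x : F.I → Rn n) : Set (Torus n) :=
  ⋃ (k : ℕ), ⋃ (c : Fin (k + 1) → F.I), ⋃ (m : Fin k → Zn n), ⋃ (_ : goodTuple F c m),
    toTorus '' convexHull ℝ (Set.range (vtx F x c m))

/-- The subset `S_i ⊆ ℝ^n`. -/
def Sset {n : ℕ} (F : BasedSeq n) (x : F.I → Rn n) (i : F.I) : Set (Rn n) :=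
  ⋃ (k : ℕ), ⋃ (c : Fin (k + 1) → F.I), ⋃ (m : Fin k → Zn n),
    ⋃ (_ : c 0 = i ∧ goodTuple F c m), convexHull ℝ (Set.range (vtx F x c m))

/-- `[x, S] = {t·x + (1−t)·y : y ∈ S, t ∈ [0,1]}`. -/
def joinSet {n : ℕ} (x : Rn n) (S : Set (Rn n)) : Set (Rn n) :=
  {p | ∃ y ∈ S, ∃ t ∈ Set.Icc (0 : ℝ) 1, p = t • x + (1 - t) • y}

section AuxLemmas

variable {n : ℕ}

lemma zToR_add (a b : Zn n) : zToR (a + b) = zToR a + zToR b := by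
  funext j; simp [zToR]

lemma zToR_zero : zToR (0 : Zn n) = 0 := by funext j; simp [zToR]

lemma zToR_sub (a b : Zn n) : zToR (a - b) = zToR a - zToR b := by
  funext j; simp [zToR]

lemma zToR_injective : Function.Injective (zToR (n := n)) := by
  intro a b h
  funext j
  have := congrFun h j
  simp only [zToR] at this
  exact_mod_cast this

lemma zToR_mem_intLattice (t : Zn n) : zToR t ∈ intLattice n := by
  intro j _
  exact ⟨t j, by simp [zToR]⟩

lemma mem_intLattice_iff {v : Rn n} : v ∈ intLattice n ↔ ∃ t : Zn n, zToR t = v := by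
  constructor
  · intro h
    have h' : ∀ j, ∃ k : ℤ, (k : ℝ) = v j := by
      intro j
      obtain ⟨k, hk⟩ := h j (Set.mem_univ j)
      exact ⟨k, by simpa using hk⟩
    choose t ht using h'
    exact ⟨t, funext ht⟩
  · rintro ⟨t, rfl⟩; exact zToR_mem_intLattice t

lemma toTorus_eq_iff {p q : Rn n} : toTorus p = toTorus q ↔ ∃ t : Zn n, q = p + zToR t := by
  simp only [toTorus]
  rw [QuotientAddGroup.eq, mem_intLattice_iff]
  constructor
  · rintro ⟨t, ht⟩
    exact ⟨t, by rw [ht]; abel⟩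
  · rintro ⟨t, rfl⟩
    exact ⟨t, by abel⟩

lemma toTorus_add_zToR (p : Rn n) (t : Zn n) : toTorus (p + zToR t) = toTorus p := by
  symm; exact toTorus_eq_iff.mpr ⟨t, rfl⟩

lemma fin_one_eq {α : Type*} (y : Fin 1 → α) : y = ![y 0] := by
  funext a; fin_cases a; rfl

lemma fin_two_eq {α : Type*} (y : Fin 2 → α) : y = ![y 0, y 1] := by
  funext a; fin_cases a <;> simp

lemma cons_add_one {α : Type*} [Add α] (p v : α) :
    (fun a : Fin 1 => ![p] a + v) = ![p + v] := by
  funext a; fin_cases a; simp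

lemma cons_add_two {α : Type*} [Add α] (p q v : α) :
    (fun a : Fin 2 => ![p, q] a + v) = ![p + v, q + v] := by
  funext a; fin_cases a <;> simp

lemma sum_filter_succ {M : Type*} [AddCommMonoid M] {k : ℕ} (m : Fin k → M) (b : Fin k) :
    ∑ ℓ ∈ Finset.univ.filter (fun ℓ : Fin k => (ℓ : ℕ) < (b : ℕ) + 1), m ℓ
      = (∑ ℓ ∈ Finset.univ.filter (fun ℓ : Fin k => (ℓ : ℕ) < (b : ℕ)), m ℓ) + m b := by
  have h : Finset.univ.filter (fun ℓ : Fin k => (ℓ : ℕ) < (b : ℕ) + 1)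
      = insert b (Finset.univ.filter (fun ℓ : Fin k => (ℓ : ℕ) < (b : ℕ))) := by
    ext ℓ
    simp [Fin.ext_iff]
    omega
  rw [h, Finset.sum_insert (by simp)]
  exact add_comm _ _

lemma sum_telescope_fin {M : Type*} [AddCommGroup M] {N : ℕ} (g : Fin (N + 1) → M)
    (a : Fin (N + 1)) :
    ∑ ℓ ∈ Finset.univ.filter (fun ℓ : Fin N => (ℓ : ℕ) < (a : ℕ)),
      (g ℓ.succ - g ℓ.castSucc) = g a - g 0 := by
  induction a using Fin.induction with
  | zero => simp
  | succ b ih =>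
    have hv : ((b.succ : Fin (N + 1)) : ℕ) = (b : ℕ) + 1 := rfl
    rw [hv, sum_filter_succ]
    have hv' : ((b.castSucc : Fin (N + 1)) : ℕ) = (b : ℕ) := rfl
    rw [hv'] at ih
    rw [ih]
    abel

end AuxLemmas

lemma vtx_apply {n : ℕ} (F : BasedSeq n) (x : F.I → Rn n) {k : ℕ}
    (c : Fin (k + 1) → F.I) (m : Fin k → Zn n) (a : Fin (k + 1)) :
    vtx F x c m a
      = x (c a) + zToR (∑ ℓ ∈ Finset.univ.filter (fun ℓ : Fin k => (ℓ : ℕ) < (a : ℕ)), m ℓ) :=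
  rfl

lemma mem_Eset_iff {n : ℕ} (F : BasedSeq n) (i j : F.I) (m : Zn n) :
    m ∈ Eset F i j ↔ EChain F i j m := Iff.rfl

/-- a finite linear semi-simplicial complex over `T^n` admitting a degree
function satisfying conditions (1) and (2) is of the form `X(F^•)` for some bounded based
sequence `F^•` (which may be taken with all nonzero coefficients equal to `1`) and some
choice of points `x_i`. -/
theorem stmt5 (n : ℕ) (hn : 1 ≤ n)
    (Xp : (k : ℕ) → (Fin (k + 1) → Rn n) → Prop)
    (hinv : ∀ (k : ℕ) (y : Fin (k + 1) → Rn n) (t : Zn n),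
      Xp k y → Xp k fun a => y a + zToR t)
    (hface : ∀ (k : ℕ) (y : Fin (k + 2) → Rn n), Xp (k + 1) y →
      ∀ j : Fin (k + 2), Xp k fun a => y (j.succAbove a))
    (hfin : ∀ k : ℕ, Set.Finite {p : Torus n × (Fin k → Rn n) |
      ∃ y : Fin (k + 1) → Rn n, Xp k y ∧
        p = (toTorus (y 0), fun a : Fin k => y a.succ - y 0)})
    (hbdd : ∃ K : ℕ, ∀ k : ℕ, K ≤ k → ∀ y : Fin (k + 1) → Rn n, ¬ Xp k y)
    (hne : ∃ y : Fin 1 → Rn n, Xp 0 y)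
    (vdeg : Torus n → ℤ)
    (h1 : ∀ p q : Rn n, Xp 1 ![p, q] ↔
      ∃ (k : ℕ) (c : Fin (k + 2) → Rn n), c 0 = p ∧ c (Fin.last (k + 1)) = q ∧
        (∀ a, Xp 0 ![c a]) ∧
        ∀ a : Fin (k + 1), Xp 1 ![c a.castSucc, c a.succ] ∧
          vdeg (toTorus (c a.succ)) = vdeg (toTorus (c a.castSucc)) + 1)
    (h2 : ∀ (k : ℕ) (y : Fin (k + 3) → Rn n), Xp (k + 2) y ↔
      (∀ a, Xp 0 ![y a]) ∧
        ∀ a : Fin (k + 2), Xp 1 ![y a.castSucc, y a.succ]) :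
    ∃ (F : BasedSeq n) (x : F.I → Rn n),
      (∀ i j : F.I, ∀ m ∈ (F.d i j).coeff.support, (F.d i j).coeff m = 1) ∧
        ∀ (k : ℕ) (y : Fin (k + 1) → Rn n), Xp k y ↔ InX F x k y := by
  classical
  -- the vertex set
  let V : Set (Torus n) := {v | ∃ p : Rn n, Xp 0 ![p] ∧ toTorus p = v}
  have hXp0 : ∀ y : Fin 1 → Rn n, Xp 0 y ↔ Xp 0 ![y 0] := by
    intro y
    rw [← fin_one_eq y]
  have hVfin : V.Finite := by
    apply Set.Finite.subset ((hfin 0).image Prod.fst)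
    rintro v ⟨p, hp, rfl⟩
    exact ⟨(toTorus (![p] 0), fun a : Fin 0 => ![p] a.succ - ![p] 0), ⟨![p], hp, rfl⟩, rfl⟩
  have hvertV : ∀ i : ↥V, ∃ p : Rn n, Xp 0 ![p] ∧ toTorus p = i.1 := fun i => i.2
  choose x hx hxT using hvertV
  have hVne : Nonempty ↥V := by
    obtain ⟨y, hy⟩ := hne
    exact ⟨⟨toTorus (y 0), y 0, (hXp0 y).mp hy, rfl⟩⟩
  obtain ⟨M, hMle, i0, hi0⟩ :
      ∃ M : ℤ, (∀ i : ↥V, vdeg i.1 ≤ M) ∧ ∃ i : ↥V, vdeg i.1 = M := by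
    haveI : Fintype ↥V := hVfin.fintype
    have hne' : (Finset.univ.image (fun i : ↥V => vdeg i.1)).Nonempty := by
      obtain ⟨i⟩ := hVne
      exact ⟨vdeg i.1, Finset.mem_image_of_mem _ (Finset.mem_univ i)⟩
    refine ⟨Finset.max' _ hne', fun i => Finset.le_max'
      (Finset.univ.image (fun i : ↥V => vdeg i.1)) (vdeg i.1)
      (Finset.mem_image_of_mem _ (Finset.mem_univ i)), ?_⟩
    have hmem := Finset.max'_mem _ hne'
    rw [Finset.mem_image] at hmem
    obtain ⟨i, -, hi⟩ := hmem
    exact ⟨i, hi⟩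
  -- translation invariance
  have hXp0shift : ∀ (p : Rn n) (t : Zn n), Xp 0 ![p] → Xp 0 ![p + zToR t] := by
    intro p t h
    have h' := hinv 0 ![p] t h
    rwa [cons_add_one] at h'
  have hXp1shift : ∀ (p q : Rn n) (t : Zn n), Xp 1 ![p, q] → Xp 1 ![p + zToR t, q + zToR t] := by
    intro p q t h
    have h' := hinv 1 ![p, q] t h
    rwa [cons_add_two] at h'
  have hxV : ∀ (i : ↥V) (t : Zn n), Xp 0 ![x i + zToR t] := fun i t => hXp0shift _ t (hx i)
  have hvert : ∀ p : Rn n, Xp 0 ![p] → ∃ (i : ↥V) (t : Zn n), p = x i + zToR t := by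
    intro p hp
    refine ⟨⟨toTorus p, p, hp, rfl⟩, ?_⟩
    exact toTorus_eq_iff.mp (hxT ⟨toTorus p, p, hp, rfl⟩)
  -- the edge exponent sets
  have hEfin : ∀ i j : ↥V, Set.Finite {m : Zn n | Xp 1 ![x j, x i + zToR m]} := by
    intro i j
    apply Set.Finite.of_finite_image (f := fun m : Zn n =>
      ((toTorus (x j), fun _ : Fin 1 => (x i + zToR m) - x j) : Torus n × (Fin 1 → Rn n)))
    · apply Set.Finite.subset (hfin 1)
      rintro _ ⟨m, hm, rfl⟩
      refine ⟨![x j, x i + zToR m], hm, ?_⟩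
      refine Prod.ext ?_ ?_
      · simp
      · funext a
        fin_cases a
        simp
    · intro a _ b _ hab
      have h' := congrFun (congrArg Prod.snd hab) 0
      simp only at h'
      rw [sub_left_inj, add_right_inj] at h'
      exact zToR_injective h'
  set dF : ↥V → ↥V → LaurentRing n := fun i j =>
    if vdeg i.1 - M = vdeg j.1 - M + 1 then
      AddMonoidAlgebra.ofCoeff (∑ m ∈ (hEfin i j).toFinset, Finsupp.single m (1 : ℂ))
    else 0 with hdF
  have hdapp : ∀ (i j : ↥V) (m : Zn n),
      (dF i j).coeff m = if vdeg i.1 - M = vdeg j.1 - M + 1 ∧ Xp 1 ![x j, x i + zToR m]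
        then 1 else 0 := by
    intro i j m
    by_cases h : vdeg i.1 - M = vdeg j.1 - M + 1
    · simp only [hdF, if_pos h, AddMonoidAlgebra.coeff_ofCoeff]
      rw [Finsupp.finset_sum_apply]
      simp only [Finsupp.single_apply]
      rw [Finset.sum_ite_eq' ((hEfin i j).toFinset) m (fun _ => (1 : ℂ))]
      simp [Set.Finite.mem_toFinset, h]
    · simp only [hdF, if_neg h]
      simp [h]
  have hdsupp : ∀ (i j : ↥V) (m : Zn n),
      m ∈ (dF i j).coeff.support ↔
        (vdeg i.1 - M = vdeg j.1 - M + 1 ∧ Xp 1 ![x j, x i + zToR m]) := by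
    intro i j m
    rw [Finsupp.mem_support_iff, hdapp]
    split_ifs with h
    · exact iff_of_true one_ne_zero h
    · exact iff_of_false (by simp) h
  let F : BasedSeq n :=
    { I := ↥V
      fintypeI := hVfin.fintype
      deg := fun i => vdeg i.1 - M
      deg_nonpos := fun i => sub_nonpos.mpr (hMle i)
      exists_deg_zero := ⟨i0, sub_eq_zero.mpr hi0⟩
      d := dF
      d_eq_zero := fun i j h => if_neg h }
  -- the one-step relation on points of ℝ^n
  set R : Rn n → Rn n → Prop := fun u v =>
    Xp 1 ![u, v] ∧ Xp 0 ![u] ∧ Xp 0 ![v] ∧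
      vdeg (toTorus v) = vdeg (toTorus u) + 1 with hRdef
  have hRshift : ∀ (u v : Rn n) (t : Zn n), R u v → R (u + zToR t) (v + zToR t) := by
    rintro u v t ⟨ha, hb, hc, hd⟩
    exact ⟨hXp1shift _ _ t ha, hXp0shift _ t hb, hXp0shift _ t hc, by
      rw [toTorus_add_zToR, toTorus_add_zToR]; exact hd⟩
  have htrans_to_chain : ∀ p q : Rn n, Relation.TransGen R p q →
      ∃ (k : ℕ) (c : Fin (k + 2) → Rn n), c 0 = p ∧ c (Fin.last (k + 1)) = q ∧
        (∀ a, Xp 0 ![c a]) ∧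
        ∀ a : Fin (k + 1), Xp 1 ![c a.castSucc, c a.succ] ∧
          vdeg (toTorus (c a.succ)) = vdeg (toTorus (c a.castSucc)) + 1 := by
    intro p q h
    induction h using Relation.TransGen.head_induction_on with
    | @single a hr =>
      refine ⟨0, ![a, q], rfl, rfl, ?_, ?_⟩
      · intro b
        fin_cases b
        · exact hr.2.1
        · exact hr.2.2.1
      · intro b
        fin_cases b
        refine ⟨?_, ?_⟩
        · show Xp 1 ![_, _]
          simpa using hr.1
        · simpa using hr.2.2.2
    | @head a c' hr hT IH =>
      obtain ⟨k, c, hc0, hcl, hcv, hce⟩ := IH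
      refine ⟨k + 1, Fin.cons a c, Fin.cons_zero _ _, ?_, ?_, ?_⟩
      · rw [← Fin.succ_last, Fin.cons_succ]
        exact hcl
      · intro b
        refine Fin.cases ?_ ?_ b
        · rw [Fin.cons_zero]
          exact hr.2.1
        · intro b'
          rw [Fin.cons_succ]
          exact hcv b'
      · intro b
        refine Fin.cases ?_ ?_ b
        · simp only [Fin.castSucc_zero, Fin.cons_zero, Fin.succ_zero_eq_one]
          have h1' : (Fin.cons a c : Fin (k + 3) → Rn n) 1 = c 0 := by
            rw [← Fin.succ_zero_eq_one, Fin.cons_succ]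
          rw [h1', hc0]
          exact ⟨hr.1, hr.2.2.2⟩
        · intro b'
          simp only [← Fin.succ_castSucc, Fin.cons_succ]
          exact hce b'
  have hchain_to_trans : ∀ (k : ℕ) (c : Fin (k + 2) → Rn n),
      (∀ a, Xp 0 ![c a]) →
      (∀ a : Fin (k + 1), Xp 1 ![c a.castSucc, c a.succ] ∧
        vdeg (toTorus (c a.succ)) = vdeg (toTorus (c a.castSucc)) + 1) →
      Relation.TransGen R (c 0) (c (Fin.last (k + 1))) := by
    intro k
    induction k with
    | zero =>
      intro c hv he
      have h0 := he 0
      refine Relation.TransGen.single ⟨?_, hv 0, hv (Fin.last 1), ?_⟩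
      · simpa using h0.1
      · simpa using h0.2
    | succ k ihk =>
      intro c hv he
      have hhead : R (c 0) (c 1) := by
        have h0 := he 0
        simp only [Fin.castSucc_zero, Fin.succ_zero_eq_one] at h0
        exact ⟨h0.1, hv 0, hv 1, h0.2⟩
      have htail := ihk (fun a => c a.succ) (fun a => hv a.succ) (fun a => by
        have h' := he a.succ
        simp only [← Fin.succ_castSucc] at h'
        exact h')
      simp only [Fin.succ_zero_eq_one, Fin.succ_last] at htail
      exact Relation.TransGen.head hhead htail
  have hXp1_of_trans : ∀ p q : Rn n, Relation.TransGen R p q → Xp 1 ![p, q] := by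
    intro p q h
    rw [h1]
    exact htrans_to_chain p q h
  have hXp1_to_trans : ∀ p q : Rn n, Xp 1 ![p, q] → Relation.TransGen R p q := by
    intro p q h
    obtain ⟨k, c, hc0, hcl, hcv, hce⟩ := (h1 p q).mp h
    have h' := hchain_to_trans k c hcv hce
    rwa [hc0, hcl] at h'
  -- forward: chains in F give transitive chains
  have hFwd : ∀ (i j : ↥V) (m : Zn n), EChain F i j m →
      Relation.TransGen R (x j) (x i + zToR m) := by
    intro i j m h
    refine EChain.rec (motive := fun i j m _ => Relation.TransGen R (x j) (x i + zToR m)) ?_ ?_ h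
    · intro i j m hdeg hm
      obtain ⟨hd1, hXp⟩ := (hdsupp i j m).mp hm
      refine Relation.TransGen.single ⟨hXp, hx j, hxV i m, ?_⟩
      rw [toTorus_add_zToR, hxT, hxT]
      omega
    · intro i j k' m m' hch hdeg hm ih
      obtain ⟨hd1, hXp⟩ := (hdsupp i j m').mp hm
      refine Relation.TransGen.tail ih ?_
      have hs := hRshift _ _ m ⟨hXp, hx j, hxV i m', by
        rw [toTorus_add_zToR, hxT, hxT]; omega⟩
      have he : x i + zToR (m + m') = (x i + zToR m') + zToR m := by
        rw [zToR_add]; abel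
      rwa [he]
  -- backward: transitive chains give chains in F
  have hBack : ∀ p q : Rn n, Relation.TransGen R p q →
      ∀ (i j : ↥V) (s t : Zn n), p = x j + zToR s → q = x i + zToR t →
        EChain F i j (t - s) := by
    intro p q h
    induction h with
    | @single b hr =>
      intro i j s t hp hq
      refine EChain.base ?_ ?_
      · show vdeg i.1 - M = vdeg j.1 - M + 1
        have h4 := hr.2.2.2
        rw [hp, hq, toTorus_add_zToR, toTorus_add_zToR, hxT, hxT] at h4
        omega
      · refine (hdsupp i j (t - s)).mpr ⟨?_, ?_⟩
        · have h4 := hr.2.2.2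
          rw [hp, hq, toTorus_add_zToR, toTorus_add_zToR, hxT, hxT] at h4
          omega
        · have hsh := hXp1shift p b (-s) hr.1
          have e1 : p + zToR (-s) = x j := by
            rw [hp, add_assoc, ← zToR_add]
            simp [zToR_zero]
          have e2 : b + zToR (-s) = x i + zToR (t - s) := by
            rw [hq, add_assoc, ← zToR_add]
            congr 2
          rwa [e1, e2] at hsh
    | @tail b c' hT hr ih =>
      intro i j s t hp hq
      obtain ⟨j', s', hb⟩ := hvert b hr.2.1
      have e1 := ih j' j s s' hp hb
      have hd : vdeg i.1 - M = vdeg j'.1 - M + 1 := by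
        have h4 := hr.2.2.2
        rw [hq, hb, toTorus_add_zToR, toTorus_add_zToR, hxT, hxT] at h4
        omega
      have hm' : (t - s') ∈ (dF i j').coeff.support := by
        refine (hdsupp i j' (t - s')).mpr ⟨hd, ?_⟩
        have hsh := hXp1shift b c' (-s') hr.1
        have eb : b + zToR (-s') = x j' := by
          rw [hb, add_assoc, ← zToR_add]
          simp [zToR_zero]
        have ec : c' + zToR (-s') = x i + zToR (t - s') := by
          rw [hq, add_assoc, ← zToR_add]
          congr 2
        rwa [eb, ec] at hsh
      have hstep := EChain.step e1 hd hm'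
      have heq : s' - s + (t - s') = t - s := by abel
      rwa [heq] at hstep
  have hedge_iff : ∀ (i j : ↥V) (m : Zn n),
      Xp 1 ![x j, x i + zToR m] ↔ EChain F i j m := by
    intro i j m
    constructor
    · intro h
      have h' := hBack _ _ (hXp1_to_trans _ _ h) i j 0 m
       (by simp [zToR_zero]) rfl
      simpa using h'
    · intro h
      exact hXp1_of_trans _ _ (hFwd i j m h)
  refine ⟨F, x, ?_, ?_⟩
  · intro i j m hm
    obtain ⟨hd1, hXp⟩ := (hdsupp i j m).mp hm
    show (dF i j).coeff m = 1
    rw [hdapp]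
    exact if_pos ⟨hd1, hXp⟩
  · intro k y
    match k with
    | 0 =>
      constructor
      · intro h
        obtain ⟨i, t, hp⟩ := hvert (y 0) ((hXp0 y).mp h)
        refine ⟨fun _ => i, Fin.elim0, t, fun ℓ => ℓ.elim0, ?_⟩
        intro a
        have ha : a = 0 := Fin.fin_one_eq_zero a
        subst ha
        rw [vtx_apply]
        simpa [zToR_zero] using hp
      · rintro ⟨c, m, t, -, hy⟩
        have h0 := hy 0
        rw [vtx_apply] at h0
        have hy0 : y 0 = x (c 0) + zToR t := by
          rw [h0]
          simp [zToR_zero]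
        rw [hXp0, hy0]
        exact hxV (c 0) t
    | 1 =>
      have hfilt0 : (Finset.univ.filter fun ℓ : Fin 1 => (ℓ : ℕ) < ((0 : Fin 2) : ℕ)) = ∅ := by
        decide
      have hfilt1 : (Finset.univ.filter fun ℓ : Fin 1 => (ℓ : ℕ) < ((1 : Fin 2) : ℕ)) = {0} := by
        decide
      constructor
      · intro h
        have h' : Xp 1 ![y 0, y 1] := by rw [← fin_two_eq y]; exact h
        obtain ⟨K, cc, hc0, hcl, hcv, -⟩ := (h1 _ _).mp h'
        have hy0 : Xp 0 ![y 0] := by rw [← hc0]; exact hcv 0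
        have hy1 : Xp 0 ![y 1] := by rw [← hcl]; exact hcv _
        obtain ⟨j, s, hs⟩ := hvert (y 0) hy0
        obtain ⟨i, t, ht⟩ := hvert (y 1) hy1
        have hE : EChain F i j (t - s) := hBack _ _ (hXp1_to_trans _ _ h') i j s t hs ht
        refine ⟨![j, i], fun _ => t - s, s, ?_, ?_⟩
        · intro ℓ
          fin_cases ℓ
          show EChain F (![j, i] (Fin.succ 0)) (![j, i] (Fin.castSucc 0)) (t - s)
          simpa using hE
        · have e0 : y 0 = vtx F x ![j, i] (fun _ => t - s) 0 + zToR s := by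
            rw [vtx_apply, hfilt0]
            simpa [zToR_zero] using hs
          have e1 : y 1 = vtx F x ![j, i] (fun _ => t - s) 1 + zToR s := by
            rw [vtx_apply, hfilt1, Finset.sum_singleton]
            simp only [Matrix.cons_val_one, Matrix.head_cons, Matrix.cons_val_zero]
            rw [ht, add_assoc, ← zToR_add, sub_add_cancel]
          intro a
          fin_cases a
          · exact e0
          · exact e1
      · rintro ⟨c, m, t, hg, hy⟩
        have hE : EChain F (c 1) (c 0) (m 0) := by
          have h' := hg 0
          rw [mem_Eset_iff] at h'
          simpa using h'
        have hX := (hedge_iff (c 1) (c 0) (m 0)).mpr hE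
        have hX' := hXp1shift _ _ t hX
        have e0 : y 0 = x (c 0) + zToR t := by
          rw [hy 0, vtx_apply, hfilt0]
          simp [zToR_zero]
        have e1 : y 1 = x (c 1) + zToR (m 0) + zToR t := by
          rw [hy 1, vtx_apply, hfilt1, Finset.sum_singleton]
        show Xp 1 y
        rw [fin_two_eq y, e0, e1]
        exact hX'
    | (k + 2) =>
      rw [h2 k y]
      constructor
      · rintro ⟨hv, he⟩
        have hv' : ∀ a, ∃ (i : ↥V) (t : Zn n), y a = x i + zToR t := fun a => hvert (y a) (hv a)
        choose ii ss hss using hv'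
        refine ⟨ii, fun ℓ => ss ℓ.succ - ss ℓ.castSucc, ss 0, ?_, ?_⟩
        · intro ℓ
          rw [mem_Eset_iff]
          exact hBack _ _ (hXp1_to_trans _ _ (he ℓ)) (ii ℓ.succ) (ii ℓ.castSucc)
            (ss ℓ.castSucc) (ss ℓ.succ) (hss ℓ.castSucc) (hss ℓ.succ)
        · intro a
          rw [vtx_apply, sum_telescope_fin ss a, zToR_sub, hss a]
          abel
      · rintro ⟨c, m, t, hg, hy⟩
        constructor
        · intro a
          have e : y a = x (c a) +
              zToR ((∑ ℓ ∈ Finset.univ.filter (fun ℓ : Fin (k + 2) => (ℓ : ℕ) < (a : ℕ)), m ℓ)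
                + t) := by
            rw [hy a, vtx_apply, zToR_add]
            abel
          rw [hXp0]
          simp only [Matrix.cons_val_zero]
          rw [e]
          exact hxV _ _
        · intro a
          have hE : EChain F (c a.succ) (c a.castSucc) (m a) := hg a
          have hX := (hedge_iff (c a.succ) (c a.castSucc) (m a)).mpr hE
          have hX' := hXp1shift _ _
            ((∑ ℓ ∈ Finset.univ.filter
                (fun ℓ : Fin (k + 2) => (ℓ : ℕ) < ((a.castSucc : Fin (k + 3)) : ℕ)), m ℓ) + t) hX
          have e0 : y a.castSucc = x (c a.castSucc) +
              zToR ((∑ ℓ ∈ Finset.univ.filter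
                (fun ℓ : Fin (k + 2) => (ℓ : ℕ) < ((a.castSucc : Fin (k + 3)) : ℕ)), m ℓ) + t) := by
            rw [hy a.castSucc, vtx_apply, zToR_add]
            abel
          have hsum : (∑ ℓ ∈ Finset.univ.filter
                (fun ℓ : Fin (k + 2) => (ℓ : ℕ) < ((a.succ : Fin (k + 3)) : ℕ)), m ℓ)
              = (∑ ℓ ∈ Finset.univ.filter
                (fun ℓ : Fin (k + 2) => (ℓ : ℕ) < ((a.castSucc : Fin (k + 3)) : ℕ)), m ℓ) + m a := by
            have h' := sum_filter_succ m a
            simpa [Fin.val_succ, Fin.coe_castSucc] using h'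
          have e1 : y a.succ = x (c a.succ) + zToR (m a) +
              zToR ((∑ ℓ ∈ Finset.univ.filter
                (fun ℓ : Fin (k + 2) => (ℓ : ℕ) < ((a.castSucc : Fin (k + 3)) : ℕ)), m ℓ) + t) := by
            rw [hy a.succ, vtx_apply, hsum, zToR_add, zToR_add]
            abel
          rw [e0, e1]
          exact hX'


end
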